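/- For any matrix X ∈ ℝ^{m×n}, the nuclear norm satisfies ‖X‖_* = (1/2) inf { tr(U) + tr(V) : U ∈ S^m, V ∈ S^n, and the block matrix [[U, X],[Xᵀ, V]] is positive semidefinite }, and the infimum is attained at U = P₊ Σ₊ P₊ᵀ and V = Q₊ Σ₊ Q₊ᵀ, where X = P₊ Σ₊ Q₊ᵀ is a reduced singular value decomposition of X. -/

import Mathlib

open Matrix

private lemma trace_fromBlocks' {a b : Type*} [Fintype a] [Fintype b]
    (A : Matrix a a ℝ) (B : Matrix a b ℝ) (C : Matrix b a ℝ) (D : Matrix b b ℝ) :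
    (Matrix.fromBlocks A B C D).trace = A.trace + D.trace := by
  simp [Matrix.trace, Fintype.sum_sum_type, Matrix.diag]

private lemma psd_trace_nonneg {k : Type*} [Fintype k] [DecidableEq k] {A : Matrix k k ℝ}
    (hA : A.PosSemidef) : 0 ≤ A.trace := by
  apply Finset.sum_nonneg
  intro i _
  exact hA.diag_nonneg

open scoped MatrixOrder in
private lemma trace_mul_psd_nonneg {k : Type*} [Fintype k] [DecidableEq k]
    {A B : Matrix k k ℝ} (hA : A.PosSemidef) (hB : B.PosSemidef) :
    0 ≤ (A * B).trace := by
  have hS : CFC.sqrt A * CFC.sqrt A = A := CFC.sqrt_mul_sqrt_self A hA.nonneg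
  have h1 : (A * B).trace = (CFC.sqrt A * B * CFC.sqrt A).trace := by
    rw [trace_mul_cycle, hS]
  rw [h1]
  have : (CFC.sqrt A * B * (CFC.sqrt A)ᴴ).PosSemidef := hB.mul_mul_conjTranspose_same (CFC.sqrt A)
  rw [(CFC.sqrt_nonneg A).posSemidef.isHermitian.eq] at this
  exact psd_trace_nonneg this

/-- SDP representation of the nuclear norm: for `X = P Σ Qᵀ` a reduced SVD,
`‖X‖_* = tr Σ` is the least value of `(1/2)(tr U + tr V)` over symmetric `U, V` with
`[[U, X],[Xᵀ, V]] ⪰ 0`, attained at `(P Σ Pᵀ, Q Σ Qᵀ)`. -/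
theorem stmt9 (m n r : ℕ)
    (P : Matrix (Fin m) (Fin r) ℝ) (Q : Matrix (Fin n) (Fin r) ℝ)
    (σ : Fin r → ℝ) (hσ : ∀ i, 0 < σ i)
    (hP : Pᵀ * P = 1) (hQ : Qᵀ * Q = 1)
    (X : Matrix (Fin m) (Fin n) ℝ)
    (hX : X = P * Matrix.diagonal σ * Qᵀ) :
    IsLeast {t : ℝ | ∃ (U : Matrix (Fin m) (Fin m) ℝ) (V : Matrix (Fin n) (Fin n) ℝ),
        U.IsSymm ∧ V.IsSymm ∧ (Matrix.fromBlocks U X Xᵀ V).PosSemidef ∧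
        t = (1/2) * (U.trace + V.trace)} (∑ i, σ i) ∧
    (Matrix.fromBlocks (P * Matrix.diagonal σ * Pᵀ) X Xᵀ
        (Q * Matrix.diagonal σ * Qᵀ)).PosSemidef ∧
    (1/2) * ((P * Matrix.diagonal σ * Pᵀ).trace + (Q * Matrix.diagonal σ * Qᵀ).trace) =
      ∑ i, σ i := by
  set D := Matrix.diagonal σ with hD
  -- traces of the attaining pair
  have htrP : (P * D * Pᵀ).trace = ∑ i, σ i := by
    rw [trace_mul_cycle, hP, Matrix.one_mul, hD, trace_diagonal]
  have htrQ : (Q * D * Qᵀ).trace = ∑ i, σ i := by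
    rw [trace_mul_cycle, hQ, Matrix.one_mul, hD, trace_diagonal]
  -- PSD of the attaining block matrix
  have hW0 : (Matrix.fromBlocks (P * D * Pᵀ) X Xᵀ (Q * D * Qᵀ)).PosSemidef := by
    have hD2 : (Matrix.fromBlocks D 0 0 D : Matrix (Fin r ⊕ Fin r) (Fin r ⊕ Fin r) ℝ).PosSemidef := by
      rw [hD, Matrix.fromBlocks_diagonal]
      exact Matrix.posSemidef_diagonal_iff.mpr (by rintro (i | i) <;> exact (hσ i).le)
    have := hD2.mul_mul_conjTranspose_same
      (Matrix.fromBlocks P 0 Q 0 : Matrix (Fin m ⊕ Fin n) (Fin r ⊕ Fin r) ℝ)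
    rw [Matrix.conjTranspose_eq_transpose_of_trivial, Matrix.fromBlocks_transpose,
      Matrix.fromBlocks_multiply, Matrix.fromBlocks_multiply] at this
    simpa [hX, hD, Matrix.diagonal_transpose, Matrix.mul_assoc] using this
  refine ⟨⟨⟨P * D * Pᵀ, Q * D * Qᵀ, ?_, ?_, hW0, by rw [htrP, htrQ]; ring⟩, ?_⟩, hW0,
    by rw [htrP, htrQ]; ring⟩
  · rw [Matrix.IsSymm]
    simp [hD, Matrix.transpose_mul, Matrix.diagonal_transpose, Matrix.mul_assoc]
  · rw [Matrix.IsSymm]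
    simp [hD, Matrix.transpose_mul, Matrix.diagonal_transpose, Matrix.mul_assoc]
  -- lower bound
  rintro t ⟨U, V, hU, hV, hW, rfl⟩
  have hXQ : Pᵀ * X * Q = D := by
    rw [hX]
    simp only [Matrix.mul_assoc]
    rw [hQ, Matrix.mul_one, ← Matrix.mul_assoc, hP, Matrix.one_mul]
  have hXP : Qᵀ * Xᵀ * P = D := by
    have : (Pᵀ * X * Q)ᵀ = Dᵀ := by rw [hXQ]
    simpa [Matrix.transpose_mul, Matrix.transpose_transpose, Matrix.diagonal_transpose, hD,
      Matrix.mul_assoc] using this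
  -- the PSD quadratic form with M = [P 0; -Q 0]
  have key : 0 ≤ (Pᵀ * U * P).trace + (Qᵀ * V * Q).trace - 2 * D.trace := by
    have hN := hW.conjTranspose_mul_mul_same
      (Matrix.fromBlocks P 0 (-Q) 0 : Matrix (Fin m ⊕ Fin n) (Fin r ⊕ Fin r) ℝ)
    rw [Matrix.conjTranspose_eq_transpose_of_trivial, Matrix.fromBlocks_transpose,
      Matrix.fromBlocks_multiply, Matrix.fromBlocks_multiply] at hN
    have h0 := psd_trace_nonneg hN
    rw [trace_fromBlocks'] at h0
    simp only [Matrix.transpose_neg, Matrix.mul_zero, Matrix.zero_mul, add_zero,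
      zero_add, Matrix.neg_mul, Matrix.mul_neg, neg_neg, Matrix.trace_zero,
      Matrix.trace_add, Matrix.trace_neg, Matrix.add_mul, Matrix.mul_assoc] at h0
    have e1 : (Pᵀ * (X * Q)).trace = D.trace := by
      rw [← Matrix.mul_assoc, hXQ]
    have e2 : (Qᵀ * (Xᵀ * P)).trace = D.trace := by
      rw [← Matrix.mul_assoc, hXP]
    simp only [← Matrix.mul_assoc] at h0 e1 e2 ⊢
    linarith
  -- trace bounds: tr(Pᵀ U P) ≤ tr U, tr(Qᵀ V Q) ≤ tr V
  have hPSDU : U.PosSemidef := by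
    have := hW.submatrix Sum.inl
    have hsub : (Matrix.fromBlocks U X Xᵀ V).submatrix Sum.inl Sum.inl = U := rfl
    rwa [hsub] at this
  have hPSDV : V.PosSemidef := by
    have := hW.submatrix Sum.inr
    have hsub : (Matrix.fromBlocks U X Xᵀ V).submatrix Sum.inr Sum.inr = V := rfl
    rwa [hsub] at this
  have projP : ((1 : Matrix (Fin m) (Fin m) ℝ) - P * Pᵀ).PosSemidef := by
    have h1 : ((1 : Matrix (Fin m) (Fin m) ℝ) - P * Pᵀ)ᴴ * (1 - P * Pᵀ) = 1 - P * Pᵀ := by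
      rw [Matrix.conjTranspose_eq_transpose_of_trivial]
      simp only [Matrix.transpose_sub, Matrix.transpose_one, Matrix.transpose_mul,
        Matrix.transpose_transpose]
      have hE : P * Pᵀ * (P * Pᵀ) = P * Pᵀ := by
        rw [Matrix.mul_assoc, ← Matrix.mul_assoc Pᵀ P Pᵀ, hP, Matrix.one_mul]
      rw [Matrix.sub_mul, Matrix.mul_sub, Matrix.mul_sub, Matrix.one_mul, Matrix.mul_one, hE]
      abel_nf
      rw [Matrix.one_mul]
    have := Matrix.posSemidef_conjTranspose_mul_self ((1 : Matrix (Fin m) (Fin m) ℝ) - P * Pᵀ)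
    rwa [h1] at this
  have projQ : ((1 : Matrix (Fin n) (Fin n) ℝ) - Q * Qᵀ).PosSemidef := by
    have h1 : ((1 : Matrix (Fin n) (Fin n) ℝ) - Q * Qᵀ)ᴴ * (1 - Q * Qᵀ) = 1 - Q * Qᵀ := by
      rw [Matrix.conjTranspose_eq_transpose_of_trivial]
      simp only [Matrix.transpose_sub, Matrix.transpose_one, Matrix.transpose_mul,
        Matrix.transpose_transpose]
      have hE : Q * Qᵀ * (Q * Qᵀ) = Q * Qᵀ := by
        rw [Matrix.mul_assoc, ← Matrix.mul_assoc Qᵀ Q Qᵀ, hQ, Matrix.one_mul]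
      rw [Matrix.sub_mul, Matrix.mul_sub, Matrix.mul_sub, Matrix.one_mul, Matrix.mul_one, hE]
      abel_nf
      rw [Matrix.one_mul]
    have := Matrix.posSemidef_conjTranspose_mul_self ((1 : Matrix (Fin n) (Fin n) ℝ) - Q * Qᵀ)
    rwa [h1] at this
  have hUb : (Pᵀ * U * P).trace ≤ U.trace := by
    have h1 := trace_mul_psd_nonneg hPSDU projP
    rw [Matrix.mul_sub, Matrix.mul_one, Matrix.trace_sub] at h1
    have h2 : (U * (P * Pᵀ)).trace = (Pᵀ * U * P).trace := by
      rw [← Matrix.mul_assoc, trace_mul_cycle]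
    linarith
  have hVb : (Qᵀ * V * Q).trace ≤ V.trace := by
    have h1 := trace_mul_psd_nonneg hPSDV projQ
    rw [Matrix.mul_sub, Matrix.mul_one, Matrix.trace_sub] at h1
    have h2 : (V * (Q * Qᵀ)).trace = (Qᵀ * V * Q).trace := by
      rw [← Matrix.mul_assoc, trace_mul_cycle]
    linarith
  have hDtr : D.trace = ∑ i, σ i := by rw [hD, trace_diagonal]
  linarith
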